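/- Fix γ > 0 and let (ψ_t)_{t>0} be a family of measurable kernels in the class P_γ on M. For f ∈ L¹(M,μ) define K_t f(x) = ∫_M ψ_t(x,y) f(y) dμ(y), set M_f = ∫_M f dμ, and fix a base point x₀ ∈ M. Then for every p ∈ (1,∞), with p' the Hölder conjugate of p, one has ( ∫_M |K_t f(x) − M_f ψ_t(x,x₀)|^p · V(x, t^{1/γ})^{p/p'} dμ(x) )^{1/p} → 0 as t → +∞. -/

import Mathlib

open MeasureTheory Metric Real Filter

set_option maxHeartbeats 1000000 in
/-- `L^p` convergence (with the volume weight) to the fundamental solution,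
for kernels in the class `P_γ`, for every `1 < p < ∞` with Hölder conjugate `p'`. -/
theorem stmt_1
    {M : Type*} [MetricSpace M] [ProperSpace M] [MeasurableSpace M] [BorelSpace M]
    (μ : Measure M)
    (hVpos : ∀ (x : M) (r : ℝ), 0 < r → 0 < μ (ball x r))
    (hVfin : ∀ (x : M) (r : ℝ), 0 < r → μ (ball x r) < ⊤)
    (γ : ℝ) (hγ : 0 < γ)
    (ψ : ℝ → M → M → ℝ)
    (hψmeas : ∀ t : ℝ, 0 < t → Measurable (Function.uncurry (ψ t)))
    -- (P1)
    (hP1 : ∀ t : ℝ, 0 < t → ∀ x y : M, ψ t x y = ψ t y x ∧ 0 < ψ t x y)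
    -- (P2)
    (hP2int : ∀ t : ℝ, 0 < t → ∀ x : M, ∫ y, ψ t x y ∂μ = 1)
    (hP2sup : ∃ c C : ℝ, 0 < c ∧ c ≤ C ∧ ∀ t : ℝ, 0 < t → ∀ x : M,
        c ≤ (μ (ball x (t ^ (1/γ)))).toReal * (⨆ y : M, ψ t x y) ∧
        (μ (ball x (t ^ (1/γ)))).toReal * (⨆ y : M, ψ t x y) ≤ C)
    -- (P3)
    (hP3 : ∃ C : ℝ, 1 ≤ C ∧ ∀ t : ℝ, 0 < t → ∀ x y x₀ : M, dist x₀ y ≤ t ^ (1/γ) →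
        C⁻¹ ≤ ψ t x y / ψ t x x₀ ∧ ψ t x y / ψ t x x₀ ≤ C)
    -- (P4)
    (hP4 : ∃ θ : ℝ, 0 < θ ∧ ∀ ξ : ℝ, 0 < ξ → ∃ Cξ t₀ : ℝ, 0 < Cξ ∧ 0 < t₀ ∧
        ∀ t : ℝ, t₀ < t → ∀ x x₀ y : M, dist x₀ y ≤ ξ →
          |ψ t x x₀ - ψ t x y| ≤ Cξ * t ^ (-θ) * ψ t x x₀)
    (f : M → ℝ) (hf : Integrable f μ) (x₀ : M)
    (p p' : ℝ) (hp : 1 < p) (hp' : 1/p + 1/p' = 1) :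
    Tendsto (fun t : ℝ =>
        (∫ x, |(∫ y, ψ t x y * f y ∂μ) - (∫ y, f y ∂μ) * ψ t x x₀| ^ p *
            ((μ (ball x (t ^ (1/γ)))).toReal) ^ (p/p') ∂μ) ^ (1/p))
      atTop (nhds 0) := by
  classical
  -- replace f by a measurable representative g
  obtain ⟨g, hgmeas, hgf⟩ : ∃ g : M → ℝ, Measurable g ∧ f =ᵐ[μ] g :=
    ⟨hf.1.mk f, hf.1.stronglyMeasurable_mk.measurable, hf.1.ae_eq_mk⟩
  have hg : Integrable g μ := hf.congr hgf
  have hint_eq : ∀ t : ℝ, ∀ x : M, (∫ y, ψ t x y * f y ∂μ) = ∫ y, ψ t x y * g y ∂μ :=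
    fun t x => integral_congr_ae (hgf.mono fun y hy => by dsimp only; rw [hy])
  have hMf : (∫ y, f y ∂μ) = ∫ y, g y ∂μ := integral_congr_ae hgf
  simp only [hint_eq, hMf]
  -- σ-finiteness
  haveI : SigmaFinite μ := by
    refine ⟨⟨⟨fun n => ball x₀ (n+1), fun _ => trivial,
      fun n => hVfin x₀ (n+1) (by positivity), ?_⟩⟩⟩
    ext x
    simp only [Set.mem_iUnion, mem_ball, Set.mem_univ, iff_true]
    obtain ⟨n, hn⟩ := exists_nat_gt (dist x x₀)
    exact ⟨n, hn.trans (lt_add_one _)⟩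
  obtain ⟨c, C2, hc, hcC2, hP2s⟩ := hP2sup
  have hC2 : 0 < C2 := hc.trans_le hcC2
  -- positivity of the volume
  have hVpos' : ∀ t : ℝ, 0 < t → ∀ x : M, 0 < (μ (ball x (t ^ (1/γ)))).toReal := fun t ht x =>
    ENNReal.toReal_pos (hVpos x _ (Real.rpow_pos_of_pos ht _)).ne'
      (hVfin x _ (Real.rpow_pos_of_pos ht _)).ne
  -- uniform upper bound V * ψ ≤ C2
  have hsup : ∀ t : ℝ, 0 < t → ∀ x y : M, (μ (ball x (t ^ (1/γ)))).toReal * ψ t x y ≤ C2 := by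
    intro t ht x y
    have hV := hVpos' t ht x
    have h2 := hP2s t ht x
    have hbdd : BddAbove (Set.range (ψ t x)) := by
      by_contra hb
      rw [Real.iSup_of_not_bddAbove hb, mul_zero] at h2
      linarith [h2.1]
    have hle : ψ t x y ≤ ⨆ y, ψ t x y := le_ciSup hbdd y
    linarith [mul_le_mul_of_nonneg_left hle hV.le, h2.2]
  have hψle : ∀ t : ℝ, 0 < t → ∀ x y : M,
      ψ t x y ≤ C2 / (μ (ball x (t ^ (1/γ)))).toReal :=
    fun t ht x y => (le_div_iff₀ (hVpos' t ht x)).2 (by rw [mul_comm]; exact hsup t ht x y)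
  -- measurability of sections
  have hmeas_y : ∀ t : ℝ, 0 < t → ∀ x : M, Measurable (ψ t x) := fun t ht x =>
    (hψmeas t ht).comp (measurable_const.prodMk measurable_id)
  have hmeas_x : ∀ t : ℝ, 0 < t → ∀ z : M, Measurable (fun x => ψ t x z) := fun t ht z =>
    (hψmeas t ht).comp (measurable_id.prodMk measurable_const)
  -- integrability of the kernel
  have hint1 : ∀ t : ℝ, 0 < t → ∀ z : M, Integrable (fun y => ψ t z y) μ := by
    intro t ht z
    by_contra h
    have h1 := hP2int t ht z
    rw [integral_undef h] at h1
    norm_num at h1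
  have hsymm : ∀ t : ℝ, 0 < t → ∀ z : M, (fun x => ψ t x z) = fun x => ψ t z x :=
    fun t ht z => funext fun x => (hP1 t ht x z).1
  have hint1' : ∀ t : ℝ, 0 < t → ∀ z : M, Integrable (fun x => ψ t x z) μ := by
    intro t ht z; rw [hsymm t ht z]; exact hint1 t ht z
  have hint_x_eq : ∀ t : ℝ, 0 < t → ∀ z : M, ∫ x, ψ t x z ∂μ = 1 := by
    intro t ht z; rw [hsymm t ht z]; exact hP2int t ht z
  -- integrability in y of the products
  have hint_mul : ∀ t : ℝ, 0 < t → ∀ x : M, ∀ h : M → ℝ, Integrable h μ → Measurable h →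
      Integrable (fun y => ψ t x y * h y) μ := by
    intro t ht x h hh hhm
    refine Integrable.mono' (hh.abs.const_mul (C2 / (μ (ball x (t ^ (1/γ)))).toReal))
      ((hmeas_y t ht x).mul hhm).aestronglyMeasurable (Eventually.of_forall fun y => ?_)
    rw [Real.norm_eq_abs, abs_mul, abs_of_pos (hP1 t ht x y).2]
    exact mul_le_mul_of_nonneg_right (hψle t ht x y) (abs_nonneg _)
  -- Fubini: the double kernel is integrable
  have hΦint : ∀ t : ℝ, 0 < t →
      Integrable (fun q : M × M => ψ t q.1 q.2 * |g q.2|) (μ.prod μ) := by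
    intro t ht
    have hm : AEStronglyMeasurable (fun q : M × M => ψ t q.1 q.2 * |g q.2|) (μ.prod μ) :=
      ((hψmeas t ht).mul ((hgmeas.comp measurable_snd).abs)).aestronglyMeasurable
    refine (integrable_prod_iff' hm).2 ⟨Eventually.of_forall fun y => ?_, ?_⟩
    · simpa using (hint1' t ht y).mul_const |g y|
    · have heq : (fun y => ∫ x, ‖ψ t x y * |g y|‖ ∂μ) = fun y => |g y| := by
        funext y
        have habs : ∀ x : M, ‖ψ t x y * |g y|‖ = ψ t x y * |g y| := fun x => by
          rw [Real.norm_eq_abs, abs_mul, abs_of_pos (hP1 t ht x y).2, abs_abs]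
        simp only [habs]
        rw [integral_mul_const, hint_x_eq t ht y, one_mul]
      rw [heq]
      exact hg.abs
  have hFint : ∀ t : ℝ, 0 < t → Integrable (fun x => ∫ y, ψ t x y * |g y| ∂μ) μ :=
    fun t ht => (hΦint t ht).integral_prod_left
  have hFval : ∀ t : ℝ, 0 < t →
      ∫ x, (∫ y, ψ t x y * |g y| ∂μ) ∂μ = ∫ y, |g y| ∂μ := by
    intro t ht
    rw [integral_integral_swap (f := fun x y => ψ t x y * |g y|) (hΦint t ht)]
    congr 1
    funext y
    rw [integral_mul_const, hint_x_eq t ht y, one_mul]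
  -- the dominating function G and its properties
  set B : ℝ := (∫ y, |g y| ∂μ) + |∫ y, g y ∂μ| with hBdef
  have hI0 : 0 ≤ ∫ y, |g y| ∂μ := integral_nonneg fun y => abs_nonneg _
  have hB : 0 ≤ B := by rw [hBdef]; positivity
  have hGint : ∀ t : ℝ, 0 < t →
      Integrable (fun x => (∫ y, ψ t x y * |g y| ∂μ) + |∫ y, g y ∂μ| * ψ t x x₀) μ :=
    fun t ht => (hFint t ht).add ((hint1' t ht x₀).const_mul _)
  have hGval : ∀ t : ℝ, 0 < t →
      ∫ x, ((∫ y, ψ t x y * |g y| ∂μ) + |∫ y, g y ∂μ| * ψ t x x₀) ∂μ = B := by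
    intro t ht
    rw [integral_add (hFint t ht) ((hint1' t ht x₀).const_mul _), hFval t ht,
      integral_const_mul, hint_x_eq t ht x₀, mul_one]
  have hGle : ∀ t : ℝ, 0 < t → ∀ x : M,
      |(∫ y, ψ t x y * g y ∂μ) - (∫ y, g y ∂μ) * ψ t x x₀| ≤
        (∫ y, ψ t x y * |g y| ∂μ) + |∫ y, g y ∂μ| * ψ t x x₀ := by
    intro t ht x
    refine (abs_sub _ _).trans ?_
    gcongr
    · calc |∫ y, ψ t x y * g y ∂μ| ≤ ∫ y, |ψ t x y| * |g y| ∂μ := by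
            simpa [Real.norm_eq_abs, abs_mul] using
              norm_integral_le_integral_norm (μ := μ) (fun y => ψ t x y * g y)
        _ = ∫ y, ψ t x y * |g y| ∂μ := by
            congr 1; funext y; rw [abs_of_pos (hP1 t ht x y).2]
    · rw [abs_mul, abs_of_pos (hP1 t ht x x₀).2]
  -- MAIN smallness lemma
  have main : ∀ ε : ℝ, 0 < ε → ∃ T : ℝ, 1 ≤ T ∧ ∀ t : ℝ, T ≤ t → ∀ x : M,
      (μ (ball x (t ^ (1/γ)))).toReal *
        |(∫ y, ψ t x y * g y ∂μ) - (∫ y, g y ∂μ) * ψ t x x₀| ≤ ε := by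
    intro ε hε
    obtain ⟨θ, hθ, hP4'⟩ := hP4
    -- choose ξ so that the tail of |g| is small
    obtain ⟨ξ, hξ, htail⟩ : ∃ ξ : ℝ, 0 < ξ ∧ ∫ y in (ball x₀ ξ)ᶜ, |g y| ∂μ ≤ ε / (4 * C2) := by
      have hδ : 0 < ε / (4 * C2) := by positivity
      have hmono : Monotone (fun n : ℕ => ball x₀ ((n : ℝ) + 1)) := fun m n h =>
        ball_subset_ball (by linarith [(Nat.cast_le (α := ℝ)).mpr h])
      have hunion : (⋃ n : ℕ, ball x₀ ((n : ℝ) + 1)) = Set.univ := by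
        ext x
        simp only [Set.mem_iUnion, mem_ball, Set.mem_univ, iff_true]
        obtain ⟨n, hn⟩ := exists_nat_gt (dist x x₀)
        exact ⟨n, hn.trans (lt_add_one _)⟩
      have htend := tendsto_setIntegral_of_monotone (fun n : ℕ => measurableSet_ball) hmono
        (f := fun y => |g y|) (μ := μ) (by rw [hunion]; exact hg.abs.integrableOn)
      rw [hunion, setIntegral_univ] at htend
      obtain ⟨N, hN⟩ := Metric.tendsto_atTop.1 htend (ε / (4 * C2)) hδ
      refine ⟨(N : ℝ) + 1, by positivity, ?_⟩
      have hsplit := integral_add_compl (measurableSet_ball (x := x₀) (ε := (N : ℝ) + 1)) hg.abs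
      have hdist := hN N le_rfl
      rw [Real.dist_eq, abs_sub_lt_iff] at hdist
      linarith [hdist.2, hsplit]
    obtain ⟨Cξ, t₀, hCξ, ht₀, hP4''⟩ := hP4' ξ hξ
    -- decay in t
    have hdecay : Tendsto (fun t : ℝ => Cξ * C2 * (∫ y, |g y| ∂μ) * t ^ (-θ)) atTop (nhds 0) := by
      simpa using (tendsto_rpow_neg_atTop hθ).const_mul (Cξ * C2 * ∫ y, |g y| ∂μ)
    have hev : ∀ᶠ t : ℝ in atTop, Cξ * C2 * (∫ y, |g y| ∂μ) * t ^ (-θ) < ε / 2 :=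
      hdecay.eventually (gt_mem_nhds (by positivity))
    obtain ⟨T₁, hT₁⟩ := eventually_atTop.1 hev
    refine ⟨max (max T₁ (t₀ + 1)) 1, le_max_right _ _, ?_⟩
    intro t ht x
    have ht1 : (1 : ℝ) ≤ t := (le_max_right _ _).trans ht
    have htpos : 0 < t := lt_of_lt_of_le one_pos ht1
    have htt₀ : t₀ < t := lt_of_lt_of_le (lt_add_one t₀)
      (((le_max_right _ _).trans (le_max_left _ _)).trans ht)
    have htT₁ : T₁ ≤ t := ((le_max_left _ _).trans (le_max_left _ _)).trans ht
    set Vx : ℝ := (μ (ball x (t ^ (1/γ)))).toReal with hVx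
    have hVxpos : 0 < Vx := hVpos' t htpos x
    -- representation of the difference
    have hrep : (∫ y, ψ t x y * g y ∂μ) - (∫ y, g y ∂μ) * ψ t x x₀
        = ∫ y, (ψ t x y - ψ t x x₀) * g y ∂μ := by
      rw [show (fun y => (ψ t x y - ψ t x x₀) * g y)
            = fun y => ψ t x y * g y - ψ t x x₀ * g y by funext y; ring]
      rw [integral_sub (hint_mul t htpos x g hg hgmeas) (hg.const_mul _), integral_const_mul]
      ring
    have habs : |(∫ y, ψ t x y * g y ∂μ) - (∫ y, g y ∂μ) * ψ t x x₀|
        ≤ ∫ y, |ψ t x y - ψ t x x₀| * |g y| ∂μ := by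
      rw [hrep]
      simpa [Real.norm_eq_abs, abs_mul] using
        norm_integral_le_integral_norm (μ := μ) (fun y => (ψ t x y - ψ t x x₀) * g y)
    -- pointwise bound on the difference kernel
    have hDptwise : ∀ y : M, |ψ t x y - ψ t x x₀| * |g y| ≤ 2 * C2 / Vx * |g y| := by
      intro y
      have h1 := hψle t htpos x y
      have h2 := hψle t htpos x x₀
      have h3 := (hP1 t htpos x y).2
      have h4 := (hP1 t htpos x x₀).2
      refine mul_le_mul_of_nonneg_right ?_ (abs_nonneg _)
      rw [abs_sub_le_iff]
      constructor <;>
        linarith [show 2 * C2 / Vx = C2 / Vx + C2 / Vx from by ring]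
    have hDint : Integrable (fun y => |ψ t x y - ψ t x x₀| * |g y|) μ := by
      refine Integrable.mono' (hg.abs.const_mul (2 * C2 / Vx))
        (((hmeas_y t htpos x).sub measurable_const).abs.mul hgmeas.abs).aestronglyMeasurable
        (Eventually.of_forall fun y => ?_)
      rw [Real.norm_eq_abs, abs_of_nonneg (mul_nonneg (abs_nonneg _) (abs_nonneg _))]
      exact hDptwise y
    -- split into near and far parts
    have hsplit : ∫ y, |ψ t x y - ψ t x x₀| * |g y| ∂μ
        = (∫ y in ball x₀ ξ, |ψ t x y - ψ t x x₀| * |g y| ∂μ)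
          + ∫ y in (ball x₀ ξ)ᶜ, |ψ t x y - ψ t x x₀| * |g y| ∂μ :=
      (integral_add_compl measurableSet_ball hDint).symm
    have htne : (0:ℝ) ≤ t ^ (-θ) := Real.rpow_nonneg htpos.le _
    have hψ0 : 0 < ψ t x x₀ := (hP1 t htpos x x₀).2
    have hnear : ∫ y in ball x₀ ξ, |ψ t x y - ψ t x x₀| * |g y| ∂μ
        ≤ Cξ * t ^ (-θ) * ψ t x x₀ * ∫ y, |g y| ∂μ := by
      calc ∫ y in ball x₀ ξ, |ψ t x y - ψ t x x₀| * |g y| ∂μ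
          ≤ ∫ y in ball x₀ ξ, (Cξ * t ^ (-θ) * ψ t x x₀) * |g y| ∂μ := by
            refine setIntegral_mono_on hDint.integrableOn
              ((hg.abs.const_mul _).integrableOn) measurableSet_ball fun y hy => ?_
            refine mul_le_mul_of_nonneg_right ?_ (abs_nonneg _)
            rw [abs_sub_comm]
            exact hP4'' t htt₀ x x₀ y (by rw [dist_comm]; exact (mem_ball.1 hy).le)
        _ = (Cξ * t ^ (-θ) * ψ t x x₀) * ∫ y in ball x₀ ξ, |g y| ∂μ := integral_const_mul _ _
        _ ≤ (Cξ * t ^ (-θ) * ψ t x x₀) * ∫ y, |g y| ∂μ := by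
            refine mul_le_mul_of_nonneg_left
              (setIntegral_le_integral hg.abs (Eventually.of_forall fun y => abs_nonneg _))
              (by positivity)
    have hfar : ∫ y in (ball x₀ ξ)ᶜ, |ψ t x y - ψ t x x₀| * |g y| ∂μ
        ≤ 2 * C2 / Vx * (ε / (4 * C2)) := by
      calc ∫ y in (ball x₀ ξ)ᶜ, |ψ t x y - ψ t x x₀| * |g y| ∂μ
          ≤ ∫ y in (ball x₀ ξ)ᶜ, 2 * C2 / Vx * |g y| ∂μ :=
            setIntegral_mono_on hDint.integrableOn
              ((hg.abs.const_mul _).integrableOn) measurableSet_ball.compl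
              fun y _ => hDptwise y
        _ = 2 * C2 / Vx * ∫ y in (ball x₀ ξ)ᶜ, |g y| ∂μ := integral_const_mul _ _
        _ ≤ 2 * C2 / Vx * (ε / (4 * C2)) :=
            mul_le_mul_of_nonneg_left htail (by positivity)
    -- combine
    have hchain : |(∫ y, ψ t x y * g y ∂μ) - (∫ y, g y ∂μ) * ψ t x x₀|
        ≤ (Cξ * t ^ (-θ) * ψ t x x₀ * ∫ y, |g y| ∂μ) + 2 * C2 / Vx * (ε / (4 * C2)) := by
      rw [hsplit] at habs
      exact habs.trans (add_le_add hnear hfar)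
    have hmul := mul_le_mul_of_nonneg_left hchain hVxpos.le
    have hc1 : Vx * ψ t x x₀ ≤ C2 := hsup t htpos x x₀
    have hT1v := hT₁ t htT₁
    have hVA : Vx * (Cξ * t ^ (-θ) * ψ t x x₀ * ∫ y, |g y| ∂μ)
        ≤ Cξ * C2 * (∫ y, |g y| ∂μ) * t ^ (-θ) := by
      have h := mul_le_mul_of_nonneg_left hc1
        (show (0:ℝ) ≤ Cξ * t ^ (-θ) * ∫ y, |g y| ∂μ by positivity)
      linarith [h]
    have hVB : Vx * (2 * C2 / Vx * (ε / (4 * C2))) = ε / 2 := by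
      field_simp
      ring
    linarith [hmul, hVA, hT1v, hVB,
      mul_add Vx (Cξ * t ^ (-θ) * ψ t x x₀ * ∫ y, |g y| ∂μ) (2 * C2 / Vx * (ε / (4 * C2)))]
  -- FINAL assembly
  rw [Metric.tendsto_atTop]
  intro ε hε
  have hp0 : p ≠ 0 := by positivity
  have hp1 : p - 1 ≠ 0 := sub_ne_zero.mpr (ne_of_gt hp)
  have hεp : 0 < ε ^ p := Real.rpow_pos_of_pos hε _
  have hB1 : (0:ℝ) < B + 1 := by linarith
  set a : ℝ := ε ^ p / (2 * (B + 1)) with hadef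
  have hapos : 0 < a := by positivity
  set ε₁ : ℝ := a ^ (p - 1)⁻¹ with hε₁def
  have hε₁pos : 0 < ε₁ := Real.rpow_pos_of_pos hapos _
  have hε₁p : ε₁ ^ (p - 1) = a := by
    rw [hε₁def, ← Real.rpow_mul hapos.le, inv_mul_cancel₀ hp1, Real.rpow_one]
  obtain ⟨T, hT1, hTprop⟩ := main ε₁ hε₁pos
  refine ⟨T, fun t htT => ?_⟩
  have htpos : 0 < t := lt_of_lt_of_le one_pos (hT1.trans htT)
  have hpp' : p / p' = p - 1 := by
    have h1 : 1 / p' = 1 - 1 / p := by linarith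
    have h2 : p / p' = p * (1 / p') := by ring
    rw [h2, h1, mul_sub, mul_one, mul_one_div, div_self hp0]
  -- nonnegativity of the integral
  have hInn : 0 ≤ ∫ x, |(∫ y, ψ t x y * g y ∂μ) - (∫ y, g y ∂μ) * ψ t x x₀| ^ p *
      ((μ (ball x (t ^ (1/γ)))).toReal) ^ (p/p') ∂μ :=
    integral_nonneg fun x => by positivity
  -- pointwise bound
  have hbound : ∀ x : M, |(∫ y, ψ t x y * g y ∂μ) - (∫ y, g y ∂μ) * ψ t x x₀| ^ p *
      ((μ (ball x (t ^ (1/γ)))).toReal) ^ (p/p')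
      ≤ ε₁ ^ (p - 1) * ((∫ y, ψ t x y * |g y| ∂μ) + |∫ y, g y ∂μ| * ψ t x x₀) := by
    intro x
    rw [hpp']
    set A : ℝ := |(∫ y, ψ t x y * g y ∂μ) - (∫ y, g y ∂μ) * ψ t x x₀| with hAdef
    set Vx : ℝ := (μ (ball x (t ^ (1/γ)))).toReal with hVxd
    have hA0 : 0 ≤ A := abs_nonneg _
    have hV0 : 0 ≤ Vx := ENNReal.toReal_nonneg
    have hkey : A * Vx ≤ ε₁ := by rw [mul_comm]; exact hTprop t htT x
    have hpne : p - 1 + 1 ≠ 0 := by intro h; apply hp0; linarith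
    have hAp : A ^ p = A ^ (p - 1) * A := by
      conv_lhs => rw [show p = p - 1 + 1 from by ring]
      rw [Real.rpow_add' hA0 hpne, Real.rpow_one]
    calc A ^ p * Vx ^ (p - 1) = (A * Vx) ^ (p - 1) * A := by
          rw [hAp, Real.mul_rpow hA0 hV0]; ring
      _ ≤ ε₁ ^ (p - 1) * A :=
          mul_le_mul_of_nonneg_right
            (Real.rpow_le_rpow (mul_nonneg hA0 hV0) hkey (by linarith)) hA0
      _ ≤ ε₁ ^ (p - 1) * ((∫ y, ψ t x y * |g y| ∂μ) + |∫ y, g y ∂μ| * ψ t x x₀) :=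
          mul_le_mul_of_nonneg_left (hGle t htpos x) (Real.rpow_nonneg hε₁pos.le _)
  have hIle : (∫ x, |(∫ y, ψ t x y * g y ∂μ) - (∫ y, g y ∂μ) * ψ t x x₀| ^ p *
      ((μ (ball x (t ^ (1/γ)))).toReal) ^ (p/p') ∂μ) ≤ ε₁ ^ (p - 1) * B := by
    calc (∫ x, |(∫ y, ψ t x y * g y ∂μ) - (∫ y, g y ∂μ) * ψ t x x₀| ^ p *
        ((μ (ball x (t ^ (1/γ)))).toReal) ^ (p/p') ∂μ)
        ≤ ∫ x, ε₁ ^ (p - 1) *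
            ((∫ y, ψ t x y * |g y| ∂μ) + |∫ y, g y ∂μ| * ψ t x x₀) ∂μ :=
          integral_mono_of_nonneg (Eventually.of_forall fun x => by positivity)
            ((hGint t htpos).const_mul _) (Eventually.of_forall hbound)
      _ = ε₁ ^ (p - 1) *
            ∫ x, ((∫ y, ψ t x y * |g y| ∂μ) + |∫ y, g y ∂μ| * ψ t x x₀) ∂μ :=
          integral_const_mul _ _
      _ = ε₁ ^ (p - 1) * B := by rw [hGval t htpos]
  have hlt : (∫ x, |(∫ y, ψ t x y * g y ∂μ) - (∫ y, g y ∂μ) * ψ t x x₀| ^ p *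
      ((μ (ball x (t ^ (1/γ)))).toReal) ^ (p/p') ∂μ) < ε ^ p := by
    rw [hε₁p] at hIle
    have h2 : a * (B + 1) = ε ^ p / 2 := by
      rw [hadef]; field_simp
    nlinarith [hIle, hapos, hB, hεp]
  rw [Real.dist_eq, sub_zero, abs_of_nonneg (Real.rpow_nonneg hInn _)]
  calc (∫ x, |(∫ y, ψ t x y * g y ∂μ) - (∫ y, g y ∂μ) * ψ t x x₀| ^ p *
      ((μ (ball x (t ^ (1/γ)))).toReal) ^ (p/p') ∂μ) ^ (1/p)
      < (ε ^ p) ^ (1/p) := Real.rpow_lt_rpow hInn hlt (by positivity)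
    _ = ε := by
      rw [← Real.rpow_mul hε.le, mul_one_div, div_self hp0, Real.rpow_one]
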